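/- If a(x,u) = ψ_uu/ψ_u, b(x,u) = (2φ_xψ_xu − ψ_uφ_xx)/(φ_xψ_u), and c(x,u) = (φ_xψ_xx − ψ_xφ_xx)/(φ_xψ_u) for smooth φ(x) (with φ_x ≠ 0) and ψ(x,u) (with ψ_u ≠ 0), then b_u − 2a_x = 0. -/

import Mathlib

/-- partial derivative in the first (x) variable -/
noncomputable def pX (f : ℝ → ℝ → ℝ) : ℝ → ℝ → ℝ := fun x u => deriv (fun t => f t u) x
/-- partial derivative in the second (u) variable -/
noncomputable def pU (f : ℝ → ℝ → ℝ) : ℝ → ℝ → ℝ := fun x u => deriv (fun v => f x v) u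

private lemma hasDerivAt_slice1 (f : ℝ × ℝ → ℝ) (x v : ℝ)
    (hf : DifferentiableAt ℝ f (x, v)) :
    HasDerivAt (fun t => f (t, v)) (fderiv ℝ f (x, v) (1, 0)) x := by
  have h1 : HasDerivAt (fun t : ℝ => (t, v)) ((1 : ℝ), (0 : ℝ)) x :=
    (hasDerivAt_id x).prodMk (hasDerivAt_const x v)
  exact hf.hasFDerivAt.comp_hasDerivAt x h1

private lemma hasDerivAt_slice2 (f : ℝ × ℝ → ℝ) (x v : ℝ)
    (hf : DifferentiableAt ℝ f (x, v)) :
    HasDerivAt (fun w => f (x, w)) (fderiv ℝ f (x, v) (0, 1)) v := by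
  have h1 : HasDerivAt (fun w : ℝ => (x, w)) ((0 : ℝ), (1 : ℝ)) v :=
    (hasDerivAt_const v x).prodMk (hasDerivAt_id v)
  exact hf.hasFDerivAt.comp_hasDerivAt v h1

/-- If a = ψ_uu/ψ_u and b = (2φ_xψ_xu − ψ_uφ_xx)/(φ_xψ_u) for C³ functions φ (with
φ_x ≠ 0) and ψ (with ψ_u ≠ 0), then b_u − 2a_x = 0. -/
theorem first_linearization_condition
    (φ : ℝ → ℝ) (ψ a b c : ℝ → ℝ → ℝ)
    (hφ : ContDiff ℝ 3 φ)
    (hψ : ContDiff ℝ 3 (fun p : ℝ × ℝ => ψ p.1 p.2))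
    (hφx : ∀ x, deriv φ x ≠ 0)
    (hψu : ∀ x v, pU ψ x v ≠ 0)
    (ha : a = fun x v => pU (pU ψ) x v / pU ψ x v)
    (hb : b = fun x v => (2 * deriv φ x * pX (pU ψ) x v - pU ψ x v * deriv (deriv φ) x)
        / (deriv φ x * pU ψ x v))
    (hc : c = fun x v => (deriv φ x * pX (pX ψ) x v - pX ψ x v * deriv (deriv φ) x)
        / (deriv φ x * pU ψ x v)) :
    ∀ x v, pU b x v - 2 * pX a x v = 0 := by
  intro x v
  subst ha hb hc
  set F : ℝ × ℝ → ℝ := fun q => ψ q.1 q.2 with hFdef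
  have hF3 : ContDiff ℝ 3 F := hψ
  have hFd : Differentiable ℝ F := hF3.differentiable (by norm_num)
  set G : ℝ × ℝ → ℝ := fun q => fderiv ℝ F q (0, 1) with hGdef
  have hG2 : ContDiff ℝ 2 G := (hF3.fderiv_right (by norm_num)).clm_apply contDiff_const
  have hGd : Differentiable ℝ G := hG2.differentiable (by norm_num)
  -- pU ψ = G
  have hpU : ∀ s t : ℝ, pU ψ s t = G (s, t) := by
    intro s t
    exact (hasDerivAt_slice2 F s t (hFd (s, t))).deriv
  set H1 : ℝ × ℝ → ℝ := fun q => fderiv ℝ G q (1, 0) with hH1def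
  set H2 : ℝ × ℝ → ℝ := fun q => fderiv ℝ G q (0, 1) with hH2def
  have hG1 : ContDiff ℝ 1 (fderiv ℝ G) := hG2.fderiv_right (by norm_num)
  have hH1d : Differentiable ℝ H1 :=
    (hG1.clm_apply contDiff_const).differentiable one_ne_zero
  have hH2d : Differentiable ℝ H2 :=
    (hG1.clm_apply contDiff_const).differentiable one_ne_zero
  -- second partials of ψ
  have hpXpU : ∀ s t : ℝ, pX (pU ψ) s t = H1 (s, t) := by
    intro s t
    have hfun : (fun r => pU ψ r t) = fun r => G (r, t) := funext fun r => hpU r t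
    show deriv (fun r => pU ψ r t) s = _
    rw [hfun]
    exact (hasDerivAt_slice1 G s t (hGd (s, t))).deriv
  have hpUpU : ∀ s t : ℝ, pU (pU ψ) s t = H2 (s, t) := by
    intro s t
    have hfun : (fun w => pU ψ s w) = fun w => G (s, w) := funext fun w => hpU s w
    show deriv (fun w => pU ψ s w) t = _
    rw [hfun]
    exact (hasDerivAt_slice2 G s t (hGd (s, t))).deriv
  -- symmetry of second derivatives of G
  have hd2 : DifferentiableAt ℝ (fderiv ℝ G) (x, v) := (hG1.differentiable one_ne_zero) _
  have e1 : fderiv ℝ H1 (x, v) =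
      (ContinuousLinearMap.apply ℝ ℝ ((1 : ℝ), (0 : ℝ))).comp
        (fderiv ℝ (fderiv ℝ G) (x, v)) := by
    have := ((ContinuousLinearMap.apply ℝ ℝ ((1 : ℝ), (0 : ℝ))).hasFDerivAt.comp (x, v)
      hd2.hasFDerivAt)
    exact this.fderiv
  have e2 : fderiv ℝ H2 (x, v) =
      (ContinuousLinearMap.apply ℝ ℝ ((0 : ℝ), (1 : ℝ))).comp
        (fderiv ℝ (fderiv ℝ G) (x, v)) := by
    have := ((ContinuousLinearMap.apply ℝ ℝ ((0 : ℝ), (1 : ℝ))).hasFDerivAt.comp (x, v)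
      hd2.hasFDerivAt)
    exact this.fderiv
  have hsym : fderiv ℝ H1 (x, v) (0, 1) = fderiv ℝ H2 (x, v) (1, 0) := by
    have hsnd : IsSymmSndFDerivAt ℝ G (x, v) :=
      hG2.contDiffAt.isSymmSndFDerivAt (by norm_num)
    rw [e1, e2]
    simpa using hsnd (0, 1) (1, 0)
  -- abbreviations
  set c1 := deriv φ x with hc1
  set c2 := deriv (deriv φ) x with hc2
  set g := G (x, v) with hg
  set g1 := H1 (x, v) with hg1
  set g2 := H2 (x, v) with hg2
  set s := fderiv ℝ H2 (x, v) (1, 0) with hs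
  have hgne : g ≠ 0 := by rw [hg, ← hpU x v]; exact hψu x v
  have hc1ne : c1 ≠ 0 := hφx x
  -- compute pX a
  have hXa : pX (fun x v => pU (pU ψ) x v / pU ψ x v) x v =
      (fderiv ℝ H2 (x, v) (1, 0) * g - H2 (x, v) * (fderiv ℝ G (x, v) (1, 0))) / g ^ 2 := by
    have hfun : (fun t => pU (pU ψ) t v / pU ψ t v) = fun t => H2 (t, v) / G (t, v) :=
      funext fun t => by rw [hpUpU t v, hpU t v]
    show deriv (fun t => pU (pU ψ) t v / pU ψ t v) x = _
    rw [hfun]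
    exact ((hasDerivAt_slice1 H2 x v (hH2d _)).div
      (hasDerivAt_slice1 G x v (hGd _)) hgne).deriv
  -- compute pU b
  have hUb : pU (fun x v => (2 * deriv φ x * pX (pU ψ) x v - pU ψ x v * deriv (deriv φ) x)
        / (deriv φ x * pU ψ x v)) x v =
      ((2 * c1 * fderiv ℝ H1 (x, v) (0, 1) - fderiv ℝ G (x, v) (0, 1) * c2) * (c1 * g)
        - (2 * c1 * g1 - g * c2) * (c1 * fderiv ℝ G (x, v) (0, 1))) / (c1 * g) ^ 2 := by
    have hfun : (fun w => (2 * deriv φ x * pX (pU ψ) x w - pU ψ x w * deriv (deriv φ) x)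
        / (deriv φ x * pU ψ x w)) =
        fun w => (2 * c1 * H1 (x, w) - G (x, w) * c2) / (c1 * G (x, w)) :=
      funext fun w => by rw [hpXpU x w, hpU x w, ← hc1, ← hc2]
    show deriv _ v = _
    rw [hfun]
    have hnum : HasDerivAt (fun w => 2 * c1 * H1 (x, w) - G (x, w) * c2)
        (2 * c1 * fderiv ℝ H1 (x, v) (0, 1) - fderiv ℝ G (x, v) (0, 1) * c2) v :=
      ((hasDerivAt_slice2 H1 x v (hH1d _)).const_mul (2 * c1)).sub
        ((hasDerivAt_slice2 G x v (hGd _)).mul_const c2)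
    have hden : HasDerivAt (fun w => c1 * G (x, w))
        (c1 * fderiv ℝ G (x, v) (0, 1)) v :=
      (hasDerivAt_slice2 G x v (hGd _)).const_mul c1
    have hdne : c1 * G (x, v) ≠ 0 := mul_ne_zero hc1ne hgne
    have hq : HasDerivAt (fun w => (2 * c1 * H1 (x, w) - G (x, w) * c2) / (c1 * G (x, w))) _ v :=
      hnum.div hden hdne
    simpa [hg, hg1] using hq.deriv
  rw [hXa, hUb, hsym]
  have hfg1 : fderiv ℝ G (x, v) (1, 0) = g1 := rfl
  have hfg2 : fderiv ℝ G (x, v) (0, 1) = g2 := rfl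
  rw [hfg1, hfg2, ← hs, ← hg2]
  field_simp
  ring
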